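/- Let h be a C² function on [a,b] with |h'(x)| > A > 0 on [a,b] and |h''(x)| < B·A/(b-a) on [a,b] for some B > 0, and let φ be C¹ on [a,b]. Then |∫_a^b e^{ih(x)} φ(x) dx| ≤ A^{-1}·(∫_a^b |φ'(x)| dx + (B+2)·sup_{[a,b]}|φ|). -/

import Mathlib

open MeasureTheory intervalIntegral

lemma ofReal_hasDerivWithinAt' {f : ℝ → ℝ} {u x : ℝ} {s : Set ℝ}
    (hf : HasDerivWithinAt f u s x) :
    HasDerivWithinAt (fun y => ((f y : ℂ))) (u : ℂ) s x := by
  exact hf.ofReal_comp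

/-- Variant of the first-derivative Van der Corput lemma (Lemma 2.2): if `|h'| > A > 0`
and `|h''| < B·A/(b-a)` on `[a,b]`, then
`|∫ e^{ih} φ| ≤ A⁻¹ (∫ |φ'| + (B+2)·sup |φ|)`. -/
theorem stmt_1 (a b A B : ℝ) (h : ℝ → ℝ) (φ : ℝ → ℂ)
    (hab : a < b) (hA : 0 < A) (hB : 0 < B)
    (hh : ContDiffOn ℝ 2 h (Set.Icc a b))
    (hh' : ∀ x ∈ Set.Icc a b, A < |deriv h x|)
    (hh'' : ∀ x ∈ Set.Icc a b, |deriv (deriv h) x| < B * A / (b - a))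
    (hφ : ContDiffOn ℝ 1 φ (Set.Icc a b)) :
    ‖∫ x in a..b, Complex.exp (Complex.I * (h x : ℂ)) * φ x‖ ≤
      A⁻¹ * ((∫ x in a..b, ‖deriv φ x‖) +
        (B + 2) * ⨆ x : Set.Icc a b, ‖φ x.1‖) := by
  have hsu : UniqueDiffOn ℝ (Set.Icc a b) := uniqueDiffOn_Icc hab
  have huIcc : Set.uIcc a b = Set.Icc a b := Set.uIcc_of_le hab.le
  set g := derivWithin h (Set.Icc a b) with hgdef
  have hg1 : ContDiffOn ℝ 1 g (Set.Icc a b) := hh.derivWithin hsu (by norm_num)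
  have hgd : DifferentiableOn ℝ g (Set.Icc a b) := hg1.differentiableOn one_ne_zero
  have hgc : ContinuousOn g (Set.Icc a b) := hgd.continuousOn
  set g' := derivWithin g (Set.Icc a b) with hg'def
  have hg'c : ContinuousOn g' (Set.Icc a b) := hg1.continuousOn_derivWithin hsu le_rfl
  have hg_eq : ∀ x ∈ Set.Icc a b, g x = deriv h x := by
    intro x hx
    have hne : deriv h x ≠ 0 := by
      have := hh' x hx
      intro hc; rw [hc] at this; simp at this; linarith
    have hd : DifferentiableAt ℝ h x := by
      by_contra hnd; exact hne (deriv_zero_of_not_differentiableAt hnd)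
    exact hd.derivWithin (hsu x hx)
  have hg'_eq : ∀ x ∈ Set.Ioo a b, g' x = deriv (deriv h) x := by
    intro x hx
    have hmem : Set.Icc a b ∈ nhds x := Icc_mem_nhds hx.1 hx.2
    have heq : g =ᶠ[nhds x] deriv h := Filter.eventuallyEq_of_mem hmem hg_eq
    rw [hg'def, derivWithin_of_mem_nhds hmem, heq.deriv_eq]
  set C := B * A / (b - a) with hC
  have hCpos : 0 < C := by apply div_pos (by positivity) (by linarith)
  have hgA : ∀ x ∈ Set.Icc a b, A < |g x| := fun x hx => by
    rw [hg_eq x hx]; exact hh' x hx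
  have hg'B : ∀ x ∈ Set.Icc a b, |g' x| ≤ C := by
    intro x hx
    have hxc : x ∈ closure (Set.Ioo a b) := by
      rw [closure_Ioo hab.ne]; exact hx
    have hne : (nhdsWithin x (Set.Ioo a b)).NeBot :=
      mem_closure_iff_nhdsWithin_neBot.mp hxc
    have htend : Filter.Tendsto (fun y => |g' y|) (nhdsWithin x (Set.Ioo a b)) (nhds |g' x|) :=
      ((hg'c x hx).mono Set.Ioo_subset_Icc_self).abs
    exact le_of_tendsto htend (Filter.eventually_of_mem self_mem_nhdsWithin
      fun y hy => by rw [hg'_eq y hy]; exact (hh'' y (Set.Ioo_subset_Icc_self hy)).le)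
  -- φ facts
  have hφc : ContinuousOn φ (Set.Icc a b) := hφ.continuousOn
  set ψ := derivWithin φ (Set.Icc a b) with hψdef
  have hψc : ContinuousOn ψ (Set.Icc a b) := hφ.continuousOn_derivWithin hsu le_rfl
  have hψ_eq : ∀ x ∈ Set.Ioo a b, ψ x = deriv φ x := by
    intro x hx
    have hmem : Set.Icc a b ∈ nhds x := Icc_mem_nhds hx.1 hx.2
    rw [hψdef, derivWithin_of_mem_nhds hmem]
  -- sup facts
  set M := ⨆ x : Set.Icc a b, ‖φ x.1‖ with hM
  have hbdd : BddAbove (Set.range fun x : Set.Icc a b => ‖φ x.1‖) := by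
    rw [← Set.image_univ]
    have hcpt : IsCompact ((fun x => ‖φ x‖) '' Set.Icc a b) :=
      (isCompact_Icc.image_of_continuousOn (hφc.norm))
    have he : (fun x : Set.Icc a b => ‖φ x.1‖) '' Set.univ = (fun x => ‖φ x‖) '' Set.Icc a b := by
      ext y; simp
    rw [he]; exact hcpt.bddAbove
  have hMle : ∀ x ∈ Set.Icc a b, ‖φ x‖ ≤ M := fun x hx =>
    le_ciSup hbdd (⟨x, hx⟩ : Set.Icc a b)
  have hM0 : 0 ≤ M := le_trans (norm_nonneg _) (hMle a (Set.left_mem_Icc.mpr hab.le))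
  -- the IBP setup
  set w : ℝ → ℂ := fun x => Complex.I * (g x : ℂ) with hwdef
  have hwne : ∀ x ∈ Set.Icc a b, w x ≠ 0 := by
    intro x hx
    have hg0 : g x ≠ 0 := by
      intro hc; have := hgA x hx; rw [hc] at this; simp at this; linarith
    simp [hwdef, Complex.I_ne_zero, hg0, Complex.ofReal_eq_zero]
  set v : ℝ → ℂ := fun x => Complex.exp (Complex.I * (h x : ℂ)) with hvdef
  set u : ℝ → ℂ := fun x => φ x * (w x)⁻¹ with hudef
  set v' : ℝ → ℂ := fun x => v x * w x with hv'def
  set u' : ℝ → ℂ := fun x => ψ x * (w x)⁻¹ + φ x * (-(w x ^ 2)⁻¹ * (Complex.I * (g' x : ℂ)))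
    with hu'def
  have hhd : DifferentiableOn ℝ h (Set.Icc a b) := hh.differentiableOn (by norm_num)
  have hw_deriv : ∀ x ∈ Set.Icc a b,
      HasDerivWithinAt w (Complex.I * (g' x : ℂ)) (Set.Icc a b) x := by
    intro x hx
    have hgder : HasDerivWithinAt g (g' x) (Set.Icc a b) x := by
      rw [hg'def]; exact (hgd x hx).hasDerivWithinAt
    exact (ofReal_hasDerivWithinAt' hgder).const_mul Complex.I
  have hv_deriv : ∀ x ∈ Set.Icc a b, HasDerivWithinAt v (v' x) (Set.Icc a b) x := by
    intro x hx
    have h1 : HasDerivWithinAt h (g x) (Set.Icc a b) x := by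
      rw [hgdef]; exact (hhd x hx).hasDerivWithinAt
    have h2 : HasDerivWithinAt (fun y => Complex.I * ((h y : ℂ))) (Complex.I * (g x : ℂ))
        (Set.Icc a b) x := (ofReal_hasDerivWithinAt' h1).const_mul Complex.I
    simpa [hvdef, hv'def, hwdef, mul_comm] using h2.cexp
  have hu_deriv : ∀ x ∈ Set.Icc a b, HasDerivWithinAt u (u' x) (Set.Icc a b) x := by
    intro x hx
    have hφd : HasDerivWithinAt φ (ψ x) (Set.Icc a b) x := by
      rw [hψdef]; exact ((hφ.differentiableOn one_ne_zero) x hx).hasDerivWithinAt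
    have hinv : HasDerivWithinAt (fun y => (w y)⁻¹)
        (-(w x ^ 2)⁻¹ * (Complex.I * (g' x : ℂ))) (Set.Icc a b) x := by
      simpa [Function.comp] using!
        (hasDerivAt_inv (hwne x hx)).comp_hasDerivWithinAt x (hw_deriv x hx)
    simpa [hudef, hu'def] using! hφd.mul hinv
  -- continuity and integrability
  have hwc : ContinuousOn w (Set.Icc a b) :=
    continuousOn_const.mul (Complex.continuous_ofReal.comp_continuousOn hgc)
  have hu'c : ContinuousOn u' (Set.Icc a b) := by
    apply ContinuousOn.add
    · exact hψc.mul (hwc.inv₀ hwne)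
    · apply hφc.mul
      apply ContinuousOn.mul
      · exact ((hwc.pow 2).inv₀ (fun x hx => pow_ne_zero 2 (hwne x hx))).neg
      · exact continuousOn_const.mul (Complex.continuous_ofReal.comp_continuousOn hg'c)
  have hvc : ContinuousOn v (Set.Icc a b) :=
    Complex.continuous_exp.comp_continuousOn
      (continuousOn_const.mul (Complex.continuous_ofReal.comp_continuousOn hh.continuousOn))
  have hv'cOn : ContinuousOn v' (Set.Icc a b) := hvc.mul hwc
  have hu'int : IntervalIntegrable u' volume a b :=
    ContinuousOn.intervalIntegrable (by rw [huIcc]; exact hu'c)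
  have hv'int : IntervalIntegrable v' volume a b :=
    ContinuousOn.intervalIntegrable (by rw [huIcc]; exact hv'cOn)
  -- integration by parts
  have hIBP : ∫ x in a..b, u x * v' x = u b * v b - u a * v a - ∫ x in a..b, u' x * v x := by
    apply intervalIntegral.integral_mul_deriv_eq_deriv_mul_of_hasDerivWithinAt
    · intro x hx; rw [huIcc] at hx ⊢; exact hu_deriv x hx
    · intro x hx; rw [huIcc] at hx ⊢; exact hv_deriv x hx
    · exact hu'int
    · exact hv'int
  have hEq : Set.EqOn (fun x => Complex.exp (Complex.I * (h x : ℂ)) * φ x)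
      (fun x => u x * v' x) (Set.uIcc a b) := by
    intro x hx; rw [huIcc] at hx
    simp only [hudef, hv'def, hvdef]
    field_simp [hwne x hx]
  rw [intervalIntegral.integral_congr hEq, hIBP]
  -- norm bounds
  have hvnorm : ∀ x : ℝ, ‖v x‖ = 1 := by
    intro x
    simp [hvdef, Complex.norm_exp, Complex.mul_re]
  have hwnorm : ∀ x, ‖w x‖ = |g x| := by
    intro x
    simp [hwdef, Real.norm_eq_abs]
  have hwinv : ∀ x ∈ Set.Icc a b, ‖(w x)⁻¹‖ ≤ A⁻¹ := by
    intro x hx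
    rw [norm_inv, hwnorm]
    exact inv_anti₀ hA (hgA x hx).le
  have hbound_pt : ∀ x ∈ Set.Icc a b, ‖u x * v x‖ ≤ A⁻¹ * M := by
    intro x hx
    rw [norm_mul, hvnorm, mul_one, hudef]
    calc ‖φ x * (w x)⁻¹‖ = ‖φ x‖ * ‖(w x)⁻¹‖ := norm_mul _ _
      _ ≤ M * A⁻¹ := mul_le_mul (hMle x hx) (hwinv x hx) (norm_nonneg _) hM0
      _ = A⁻¹ * M := mul_comm _ _
  have hub : ‖u b * v b‖ ≤ A⁻¹ * M := hbound_pt b (Set.right_mem_Icc.mpr hab.le)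
  have hua : ‖u a * v a‖ ≤ A⁻¹ * M := hbound_pt a (Set.left_mem_Icc.mpr hab.le)
  -- bound on the integral term
  have hu'bd : ∀ x ∈ Set.Icc a b, ‖u' x * v x‖ ≤ A⁻¹ * ‖ψ x‖ + M * C * (A⁻¹ * A⁻¹) := by
    intro x hx
    rw [norm_mul, hvnorm, mul_one, hu'def]
    have h1 : ‖ψ x * (w x)⁻¹‖ ≤ A⁻¹ * ‖ψ x‖ := by
      rw [norm_mul, mul_comm]
      exact mul_le_mul_of_nonneg_right (hwinv x hx) (norm_nonneg _)
    have h2 : ‖φ x * (-(w x ^ 2)⁻¹ * (Complex.I * (g' x : ℂ)))‖ ≤ M * C * (A⁻¹ * A⁻¹) := by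
      rw [norm_mul, norm_mul, norm_neg, norm_inv, norm_mul, Complex.norm_I, one_mul,
        Complex.norm_real, Real.norm_eq_abs]
      have hA2 : ‖w x ^ 2‖⁻¹ ≤ A⁻¹ * A⁻¹ := by
        rw [norm_pow, hwnorm, sq, mul_inv]
        have := inv_anti₀ hA (hgA x hx).le
        have h0 : (0:ℝ) ≤ |g x|⁻¹ := inv_nonneg.mpr (abs_nonneg _)
        exact mul_le_mul this this h0 (inv_nonneg.mpr hA.le)
      calc ‖φ x‖ * (‖w x ^ 2‖⁻¹ * |g' x|)
          ≤ M * ((A⁻¹ * A⁻¹) * C) := by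
            apply mul_le_mul (hMle x hx) _ (by positivity) hM0
            exact mul_le_mul hA2 (hg'B x hx) (abs_nonneg _) (by positivity)
        _ = M * C * (A⁻¹ * A⁻¹) := by ring
    calc ‖ψ x * (w x)⁻¹ + φ x * (-(w x ^ 2)⁻¹ * (Complex.I * (g' x : ℂ)))‖
        ≤ ‖ψ x * (w x)⁻¹‖ + ‖φ x * (-(w x ^ 2)⁻¹ * (Complex.I * (g' x : ℂ)))‖ :=
          norm_add_le _ _
      _ ≤ A⁻¹ * ‖ψ x‖ + M * C * (A⁻¹ * A⁻¹) := add_le_add h1 h2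
  have hKint : IntervalIntegrable (fun x => A⁻¹ * ‖ψ x‖ + M * C * (A⁻¹ * A⁻¹)) volume a b := by
    apply IntervalIntegrable.add _ intervalIntegrable_const
    apply IntervalIntegrable.const_mul
    exact ContinuousOn.intervalIntegrable (by rw [huIcc]; exact hψc.norm)
  have hu'vint : IntervalIntegrable (fun x => ‖u' x * v x‖) volume a b :=
    ContinuousOn.intervalIntegrable (by rw [huIcc]; exact (hu'c.mul hvc).norm)
  have hintbd : ‖∫ x in a..b, u' x * v x‖ ≤
      A⁻¹ * (∫ x in a..b, ‖ψ x‖) + (b - a) * (M * C * (A⁻¹ * A⁻¹)) := by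
    calc ‖∫ x in a..b, u' x * v x‖ ≤ ∫ x in a..b, ‖u' x * v x‖ :=
          intervalIntegral.norm_integral_le_integral_norm hab.le
      _ ≤ ∫ x in a..b, (A⁻¹ * ‖ψ x‖ + M * C * (A⁻¹ * A⁻¹)) :=
          intervalIntegral.integral_mono_on hab.le hu'vint hKint hu'bd
      _ = A⁻¹ * (∫ x in a..b, ‖ψ x‖) + (b - a) * (M * C * (A⁻¹ * A⁻¹)) := by
          have hint1 : IntervalIntegrable (fun x => A⁻¹ * ‖ψ x‖) volume a b :=
            (ContinuousOn.intervalIntegrable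
              (show ContinuousOn (fun x => ‖ψ x‖) (Set.uIcc a b) by
                rw [huIcc]; exact hψc.norm)).const_mul A⁻¹
          rw [intervalIntegral.integral_add hint1 intervalIntegrable_const,
            intervalIntegral.integral_const_mul, intervalIntegral.integral_const,
            smul_eq_mul]
  have hψint_eq : (∫ x in a..b, ‖deriv φ x‖) = ∫ x in a..b, ‖ψ x‖ := by
    apply intervalIntegral.integral_congr_ae
    have hb : ∀ᵐ x : ℝ, x ≠ b := by
      rw [Filter.eventually_iff, MeasureTheory.mem_ae_iff]
      simpa using measure_singleton (b : ℝ)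
    filter_upwards [hb] with x hxb hx
    rw [Set.uIoc_of_le hab.le] at hx
    have hxo : x ∈ Set.Ioo a b := ⟨hx.1, lt_of_le_of_ne hx.2 hxb⟩
    rw [hψ_eq x hxo]
  -- combine
  have hfinal : (b - a) * (M * C * (A⁻¹ * A⁻¹)) = A⁻¹ * (B * M) := by
    have hba : b - a ≠ 0 := sub_ne_zero.mpr hab.ne'
    have hCb : C * (b - a) = B * A := by rw [hC]; field_simp
    calc (b - a) * (M * C * (A⁻¹ * A⁻¹)) = C * (b - a) * M * (A⁻¹ * A⁻¹) := by ring
      _ = B * A * M * (A⁻¹ * A⁻¹) := by rw [hCb]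
      _ = A⁻¹ * (B * M) := by field_simp [hA.ne']
  calc ‖u b * v b - u a * v a - ∫ x in a..b, u' x * v x‖
      ≤ ‖u b * v b - u a * v a‖ + ‖∫ x in a..b, u' x * v x‖ := norm_sub_le _ _
    _ ≤ (‖u b * v b‖ + ‖u a * v a‖) + ‖∫ x in a..b, u' x * v x‖ := by
        gcongr; exact norm_sub_le _ _
    _ ≤ (A⁻¹ * M + A⁻¹ * M) + (A⁻¹ * (∫ x in a..b, ‖ψ x‖) + (b - a) * (M * C * (A⁻¹ * A⁻¹))) := by
        gcongr
    _ = A⁻¹ * ((∫ x in a..b, ‖ψ x‖) + (B + 2) * M) := by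
        rw [hfinal]; ring
    _ = A⁻¹ * ((∫ x in a..b, ‖deriv φ x‖) + (B + 2) * M) := by rw [hψint_eq]
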